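/- Let A be an n×n complex matrix and let 0 ≤ s ≤ n. Then the reduced order-one complement of order s of A is given by the trace expansion D_s(A) = (−1)^(n−s) · ∑_{r=0}^{n−s} c_{n−s−r} • A^r, where for m ≥ 0 the scalar c_m is the sum, over all tuples (k_1, …, k_m) of non-negative integers satisfying ∑_{l=1}^{m} l·k_l = m, of the products ∏_{l=1}^{m} (−1)^(k_l) / (k_l! · l^(k_l)) · (Tr(A^l))^(k_l) (with c_0 = 1, the empty product). -/

import Mathlib

/-- The reduced order-one complement of order `s` of an `n×n` matrix `A`:
the matrix whose `(i,j)` entry is the coefficient of `z^(n-s)` in the `(i,j)` entry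
of `adjugate (1 + z • A)`, computed over the polynomial ring `R[z]`. -/
noncomputable def redComp {R : Type*} [CommRing R] {n : ℕ} (s : ℕ)
    (A : Matrix (Fin n) (Fin n) R) : Matrix (Fin n) (Fin n) R :=
  Matrix.of fun i j =>
    (((1 + (Polynomial.X : Polynomial R) • A.map (fun a => Polynomial.C a) :
        Matrix (Fin n) (Fin n) (Polynomial R)).adjugate) i j).coeff (n - s)

/-- The trace coefficient `c_m`: the sum, over all tuples `(k_1, …, k_m)` of
non-negative integers with `∑ l·k_l = m` (each `k_l ≤ m` is then automatic), of
`∏_{l=1}^{m} (−1)^(k_l) / (k_l! · l^(k_l)) · (Tr(A^l))^(k_l)`.  Here `c_0 = 1`. -/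
noncomputable def traceCoeff {n : ℕ} (A : Matrix (Fin n) (Fin n) ℂ) (m : ℕ) : ℂ :=
  ∑ k ∈ (Fintype.piFinset fun _ : Fin m => Finset.range (m + 1)).filter
      (fun k : Fin m → ℕ => (∑ l : Fin m, (l.1 + 1) * k l) = m),
    ∏ l : Fin m,
      (-1 : ℂ) ^ (k l) / ((Nat.factorial (k l) : ℂ) * ((l.1 + 1 : ℕ) : ℂ) ^ (k l))
        * (Matrix.trace (A ^ (l.1 + 1))) ^ (k l)


noncomputable section RedCompAux
open Polynomial Matrix Finset

variable {n : ℕ}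

private def pS (A : Matrix (Fin n) (Fin n) ℂ) (l : ℕ) : ℂ := Matrix.trace (A ^ l)

private def gg (A : Matrix (Fin n) (Fin n) ℂ) (l j : ℕ) : ℂ :=
  (-1 : ℂ) ^ j / ((Nat.factorial j : ℂ) * ((l : ℕ) : ℂ) ^ j) * (pS A l) ^ j

private def cS (N m : ℕ) : Finset (Fin N → ℕ) :=
  (Fintype.piFinset fun _ : Fin N => Finset.range (m + 1)).filter
      (fun k : Fin N → ℕ => (∑ l : Fin N, (l.1 + 1) * k l) = m)

private def ccc (A : Matrix (Fin n) (Fin n) ℂ) (N m : ℕ) : ℂ :=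
  ∑ k ∈ cS N m, ∏ l : Fin N, gg A (l.1 + 1) (k l)

private def Mm (A : Matrix (Fin n) (Fin n) ℂ) : Matrix (Fin n) (Fin n) ℂ[X] :=
  1 + (Polynomial.X : ℂ[X]) • A.map (fun a => Polynomial.C a)

private def eC (A : Matrix (Fin n) (Fin n) ℂ) (t : ℕ) : ℂ := ((Mm A).det).coeff t

private def Dm (A : Matrix (Fin n) (Fin n) ℂ) (t : ℕ) : Matrix (Fin n) (Fin n) ℂ :=
  Matrix.of fun i j => (((Mm A).adjugate) i j).coeff t

lemma gg_zero (A : Matrix (Fin n) (Fin n) ℂ) (l : ℕ) : gg A l 0 = 1 := by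
  simp [gg]

lemma gg_succ (A : Matrix (Fin n) (Fin n) ℂ) {l : ℕ} (hl : 1 ≤ l) (j : ℕ) :
    ((l : ℂ) * ((j : ℂ) + 1)) * gg A l (j + 1) = - pS A l * gg A l j := by
  have hl' : (l : ℂ) ≠ 0 := Nat.cast_ne_zero.mpr (by omega)
  have hf : ((Nat.factorial j : ℕ) : ℂ) ≠ 0 := Nat.cast_ne_zero.mpr (Nat.factorial_ne_zero j)
  have hj : ((j : ℂ) + 1) ≠ 0 := by
    have := Nat.cast_ne_zero (R := ℂ).mpr (Nat.succ_ne_zero j)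
    push_cast at this; exact this
  have hlj : (l : ℂ) ^ j ≠ 0 := pow_ne_zero _ hl'
  simp only [gg, pow_succ, Nat.factorial_succ]
  push_cast
  field_simp



lemma mem_cS {N m : ℕ} {k : Fin N → ℕ} :
    k ∈ cS N m ↔ (∑ l : Fin N, (l.1 + 1) * k l) = m := by
  simp only [cS, Finset.mem_filter, Fintype.mem_piFinset, Finset.mem_range]
  constructor
  · exact And.right
  · intro h
    refine ⟨fun l => Nat.lt_succ_of_le ?_, h⟩
    calc k l ≤ (l.1 + 1) * k l := Nat.le_mul_of_pos_left _ (Nat.succ_pos _)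
      _ ≤ ∑ l : Fin N, (l.1 + 1) * k l :=
        Finset.single_le_sum (f := fun l : Fin N => (l.1 + 1) * k l)
          (fun _ _ => Nat.zero_le _) (Finset.mem_univ l)
      _ = m := h

lemma cS_last_eq_zero {N m : ℕ} (h : m ≤ N) {k : Fin (N + 1) → ℕ}
    (hk : k ∈ cS (N + 1) m) : k (Fin.last N) = 0 := by
  rw [mem_cS] at hk
  have h1 : ((Fin.last N).1 + 1) * k (Fin.last N) ≤ m := hk ▸
    Finset.single_le_sum (f := fun l : Fin (N+1) => (l.1 + 1) * k l)
      (fun _ _ => Nat.zero_le _) (Finset.mem_univ _)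
  simp only [Fin.val_last] at h1
  nlinarith [Nat.zero_le (k (Fin.last N))]



lemma ccc_succ (A : Matrix (Fin n) (Fin n) ℂ) {N m : ℕ} (h : m ≤ N) :
    ccc A (N + 1) m = ccc A N m := by
  refine Finset.sum_nbij' (i := fun k => Fin.init k) (j := fun k => Fin.snoc k 0)
    ?_ ?_ ?_ ?_ ?_
  · intro k hk
    have h0 := cS_last_eq_zero h hk
    rw [mem_cS] at hk ⊢
    rw [Fin.sum_univ_castSucc] at hk
    simp only [Fin.val_last, h0, Nat.mul_zero, add_zero, Fin.coe_castSucc] at hk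
    simpa [Fin.init] using hk
  · intro k hk
    rw [mem_cS] at hk ⊢
    rw [Fin.sum_univ_castSucc]
    simp [Fin.snoc_castSucc, hk]
  · intro k hk
    have h0 := cS_last_eq_zero h hk
    rw [← h0]
    exact Fin.snoc_init_self k
  · intro k _
    simp
  · intro k hk
    have h0 := cS_last_eq_zero h hk
    rw [Fin.prod_univ_castSucc]
    simp [Fin.init, h0, gg_zero]



lemma sum_weight_update {m : ℕ} (k : Fin m → ℕ) (l : Fin m) (v : ℕ) :
    ∑ j : Fin m, (j.1 + 1) * (Function.update k l v) j
      = (l.1 + 1) * v + ∑ j ∈ univ.erase l, (j.1 + 1) * k j := by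
  rw [← Finset.add_sum_erase _ _ (Finset.mem_univ l), Function.update_self]
  congr 1
  exact Finset.sum_congr rfl fun j hj => by
    rw [Function.update_of_ne (Finset.ne_of_mem_erase hj)]

lemma innerSumRC (A : Matrix (Fin n) (Fin n) ℂ) {m : ℕ} (l : Fin m) :
    ∑ k ∈ cS m m, (((l.1 + 1) * k l : ℕ) : ℂ) * ∏ j : Fin m, gg A (j.1 + 1) (k j)
      = - pS A (l.1 + 1) * ccc A m (m - (l.1 + 1)) := by
  classical
  rw [← Finset.sum_filter_add_sum_filter_not (cS m m) (fun k => k l = 0)]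
  have h1 : ∑ k ∈ (cS m m).filter (fun k => k l = 0),
      (((l.1 + 1) * k l : ℕ) : ℂ) * ∏ j : Fin m, gg A (j.1 + 1) (k j) = 0 := by
    refine Finset.sum_eq_zero fun k hk => ?_
    rw [Finset.mem_filter] at hk
    simp [hk.2]
  rw [h1, zero_add]
  rw [ccc, Finset.mul_sum]
  refine Finset.sum_nbij' (i := fun k => Function.update k l (k l - 1))
    (j := fun k => Function.update k l (k l + 1)) ?_ ?_ ?_ ?_ ?_
  · intro k hk
    rw [Finset.mem_filter, mem_cS] at hk
    obtain ⟨hsum, hne⟩ := hk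
    rw [mem_cS]
    have hw := sum_weight_update k l (k l - 1)
    rw [← Finset.add_sum_erase _ _ (Finset.mem_univ l)] at hsum
    have hl1 : l.1 + 1 ≤ m := l.2
    obtain ⟨j0, hj0⟩ := Nat.exists_eq_succ_of_ne_zero hne
    have hmul : (l.1 + 1) * (j0 + 1) = (l.1 + 1) * j0 + (l.1 + 1) := by ring
    rw [Nat.succ_eq_add_one] at hj0
    rw [hw, hj0, Nat.add_sub_cancel]
    rw [hj0, hmul] at hsum
    omega
  · intro k hk
    rw [mem_cS] at hk
    rw [Finset.mem_filter, mem_cS]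
    constructor
    · have hw := sum_weight_update k l (k l + 1)
      rw [← Finset.add_sum_erase _ _ (Finset.mem_univ l)] at hk
      have hl1 : l.1 + 1 ≤ m := l.2
      have hmul : (l.1 + 1) * (k l + 1) = (l.1 + 1) * k l + (l.1 + 1) := by ring
      rw [hw, hmul]
      omega
    · simp
  · intro k hk
    rw [Finset.mem_filter] at hk
    have hne := hk.2
    simp only [Function.update_idem, Function.update_self]
    have hkl : k l - 1 + 1 = k l := by omega
    rw [hkl, Function.update_eq_self]
  · intro k _
    simp only [Function.update_idem, Function.update_self]
    rw [Nat.add_sub_cancel, Function.update_eq_self]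
  · intro k hk
    rw [Finset.mem_filter] at hk
    obtain ⟨-, hne⟩ := hk
    obtain ⟨j0, hj0⟩ := Nat.exists_eq_succ_of_ne_zero hne
    have hsplit : ∀ f : Fin m → ℂ, ∏ j : Fin m, f j = f l * ∏ j ∈ univ.erase l, f j :=
      fun f => (Finset.mul_prod_erase univ f (Finset.mem_univ l)).symm
    rw [hsplit fun j => gg A (j.1 + 1) (k j),
        hsplit fun j => gg A (j.1 + 1) (Function.update k l (k l - 1) j)]
    have herase : ∏ j ∈ univ.erase l, gg A (j.1 + 1) (Function.update k l (k l - 1) j)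
        = ∏ j ∈ univ.erase l, gg A (j.1 + 1) (k j) := by
      refine Finset.prod_congr rfl fun j hj => ?_
      rw [Function.update_of_ne (Finset.ne_of_mem_erase hj)]
    rw [Nat.succ_eq_add_one] at hj0
    rw [herase, Function.update_self, hj0, Nat.add_sub_cancel]
    have := gg_succ A (l := l.1 + 1) (by omega) j0
    push_cast
    calc ((l.1 : ℂ) + 1) * ((j0 : ℂ) + 1) * (gg A (l.1 + 1) (j0 + 1) * ∏ j ∈ univ.erase l, gg A (j.1 + 1) (k j))
        = (((l.1 + 1 : ℕ) : ℂ) * ((j0 : ℂ) + 1) * gg A (l.1 + 1) (j0 + 1)) * ∏ j ∈ univ.erase l, gg A (j.1 + 1) (k j) := by push_cast; ring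
      _ = (- pS A (l.1 + 1) * gg A (l.1 + 1) j0) * ∏ j ∈ univ.erase l, gg A (j.1 + 1) (k j) := by rw [this]
      _ = - pS A (l.1 + 1) * (gg A (l.1 + 1) j0 * ∏ j ∈ univ.erase l, gg A (j.1 + 1) (k j)) := by ring

lemma ccc_of_le (A : Matrix (Fin n) (Fin n) ℂ) {N m : ℕ} (h : m ≤ N) :
    ccc A N m = ccc A m m := by
  induction N, h using Nat.le_induction with
  | base => rfl
  | succ N hN ih => rw [ccc_succ A hN, ih]



lemma trace_rec (A : Matrix (Fin n) (Fin n) ℂ) {m : ℕ} :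
    (m : ℂ) * ccc A m m
      = - ∑ l ∈ Finset.range m, pS A (l + 1) * ccc A (m - (l + 1)) (m - (l + 1)) := by
  have step1 : (m : ℂ) * ccc A m m
      = ∑ k ∈ cS m m, ∑ l : Fin m, (((l.1 + 1) * k l : ℕ) : ℂ)
          * ∏ j : Fin m, gg A (j.1 + 1) (k j) := by
    rw [ccc, Finset.mul_sum]
    refine Finset.sum_congr rfl fun k hk => ?_
    rw [mem_cS] at hk
    calc (m : ℂ) * ∏ j : Fin m, gg A (j.1 + 1) (k j)
        = (((∑ l : Fin m, (l.1 + 1) * k l : ℕ)) : ℂ) * ∏ j : Fin m, gg A (j.1 + 1) (k j) := by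
          rw [hk]
      _ = ∑ l : Fin m, (((l.1 + 1) * k l : ℕ) : ℂ) * ∏ j : Fin m, gg A (j.1 + 1) (k j) := by
          push_cast
          rw [Finset.sum_mul]
  rw [step1, Finset.sum_comm]
  have step2 : ∀ l : Fin m,
      ∑ k ∈ cS m m, (((l.1 + 1) * k l : ℕ) : ℂ) * ∏ j : Fin m, gg A (j.1 + 1) (k j)
        = - (pS A (l.1 + 1) * ccc A (m - (l.1 + 1)) (m - (l.1 + 1))) := by
    intro l
    rw [innerSumRC A l, ccc_of_le A (Nat.sub_le _ _)]
    ring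
  rw [Finset.sum_congr rfl fun l _ => step2 l]
  rw [Finset.sum_neg_distrib]
  rw [← Fin.sum_univ_eq_sum_range (fun l => pS A (l + 1) * ccc A (m - (l + 1)) (m - (l + 1))) m]



lemma Mm_apply (A : Matrix (Fin n) (Fin n) ℂ) (i x : Fin n) :
    Mm A i x = (if i = x then 1 else 0) + Polynomial.X * Polynomial.C (A i x) := by
  simp [Mm, Matrix.add_apply, Matrix.smul_apply, Matrix.map_apply, Matrix.one_apply]

lemma Mm_map_eval (A : Matrix (Fin n) (Fin n) ℂ) :
    (Mm A).map (Polynomial.eval 0) = 1 := by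
  ext i j
  rw [Matrix.map_apply, Mm_apply]
  by_cases h : i = j <;> simp [h, Matrix.one_apply]

lemma eC_zero (A : Matrix (Fin n) (Fin n) ℂ) : eC A 0 = 1 := by
  have h2 : (Polynomial.evalRingHom (0:ℂ)) (Mm A).det = ((Mm A).map (Polynomial.evalRingHom 0)).det :=
    RingHom.map_det _ _
  rw [eC, Polynomial.coeff_zero_eq_eval_zero]
  have h3 : (Mm A).map (Polynomial.evalRingHom (0:ℂ)) = 1 := Mm_map_eval A
  calc Polynomial.eval 0 (Mm A).det = ((Mm A).map (Polynomial.evalRingHom 0)).det := h2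
    _ = 1 := by rw [h3, Matrix.det_one]

lemma coeff_entry_mul (A : Matrix (Fin n) (Fin n) ℂ) (i x : Fin n) (Q : ℂ[X]) (t : ℕ) :
    (Mm A i x * Q).coeff (t + 1)
      = (if i = x then Q.coeff (t + 1) else 0) + A i x * Q.coeff t := by
  rw [Mm_apply, add_mul, Polynomial.coeff_add, ite_mul, one_mul, zero_mul]
  rw [mul_assoc, Polynomial.coeff_X_mul, Polynomial.coeff_C_mul]
  congr 1
  exact apply_ite (fun p : ℂ[X] => p.coeff (t + 1)) _ _ _

lemma coeff_entry_mul_zero (A : Matrix (Fin n) (Fin n) ℂ) (i x : Fin n) (Q : ℂ[X]) :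
    (Mm A i x * Q).coeff 0 = (if i = x then Q.coeff 0 else 0) := by
  rw [Mm_apply, add_mul, Polynomial.coeff_add, ite_mul, one_mul, zero_mul]
  rw [mul_assoc, Polynomial.coeff_X_mul_zero, add_zero]
  exact apply_ite (fun p : ℂ[X] => p.coeff 0) _ _ _

lemma Dm_zero (A : Matrix (Fin n) (Fin n) ℂ) : Dm A 0 = 1 := by
  have h : (Polynomial.evalRingHom (0:ℂ)).mapMatrix (Mm A).adjugate
      = Matrix.adjugate ((Polynomial.evalRingHom (0:ℂ)).mapMatrix (Mm A)) :=
    RingHom.map_adjugate _ _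
  have h3 : (Polynomial.evalRingHom (0:ℂ)).mapMatrix (Mm A) = 1 := Mm_map_eval A
  rw [h3, Matrix.adjugate_one] at h
  ext i j
  have h4 := congrFun (congrFun (congrArg (fun M : Matrix (Fin n) (Fin n) ℂ => M) h) i) j
  simp only [RingHom.mapMatrix_apply, Matrix.map_apply, coe_evalRingHom] at h4
  rw [Dm, Matrix.of_apply, Polynomial.coeff_zero_eq_eval_zero, h4]

lemma Dm_succ (A : Matrix (Fin n) (Fin n) ℂ) (t : ℕ) :
    Dm A (t + 1) + A * Dm A t = eC A (t + 1) • 1 := by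
  have h := Matrix.mul_adjugate (Mm A)
  ext i j
  have h2 : ((Mm A * (Mm A).adjugate) i j).coeff (t + 1)
      = (((Mm A).det • (1 : Matrix (Fin n) (Fin n) ℂ[X])) i j).coeff (t + 1) := by rw [h]
  rw [Matrix.mul_apply, Polynomial.finset_sum_coeff] at h2
  simp only [coeff_entry_mul] at h2
  rw [Finset.sum_add_distrib, Finset.sum_ite_eq Finset.univ i
    (fun x => ((Mm A).adjugate x j).coeff (t + 1))] at h2
  simp only [Finset.mem_univ, if_true] at h2
  rw [Matrix.smul_apply, smul_eq_mul, Matrix.one_apply, mul_ite, mul_one, mul_zero] at h2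
  rw [apply_ite (fun p : ℂ[X] => p.coeff (t + 1)), Polynomial.coeff_zero] at h2
  simp only [Matrix.add_apply, Matrix.mul_apply, Matrix.smul_apply, Matrix.one_apply,
    smul_eq_mul, mul_ite, mul_one, mul_zero, Dm, Matrix.of_apply, eC]
  exact h2

lemma Dm_formula (A : Matrix (Fin n) (Fin n) ℂ) (t : ℕ) :
    Dm A t = ∑ r ∈ Finset.range (t + 1), ((-1 : ℂ) ^ r * eC A (t - r)) • A ^ r := by
  induction t with
  | zero =>
    simp [Dm_zero, eC_zero]
  | succ t ih =>
    have hA : A * Dm A t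
        = ∑ r ∈ Finset.range (t + 1), ((-1 : ℂ) ^ r * eC A (t - r)) • A ^ (r + 1) := by
      rw [ih, Finset.mul_sum]
      refine Finset.sum_congr rfl fun r _ => ?_
      rw [mul_smul_comm, ← pow_succ']
    have h2 : Dm A (t + 1) = eC A (t + 1) • 1 - A * Dm A t :=
      eq_sub_of_add_eq (Dm_succ A t)
    have hf0 : ((-1 : ℂ) ^ 0 * eC A (t + 1 - 0)) • A ^ 0
        = eC A (t + 1) • (1 : Matrix (Fin n) (Fin n) ℂ) := by simp
    have hfr : ∀ r, ((-1 : ℂ) ^ (r + 1) * eC A (t + 1 - (r + 1))) • A ^ (r + 1)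
        = -(((-1 : ℂ) ^ r * eC A (t - r)) • A ^ (r + 1)) := by
      intro r
      rw [Nat.succ_sub_succ, ← neg_smul]
      congr 1
      ring
    rw [h2, hA,
      Finset.sum_range_succ' (fun r => ((-1 : ℂ) ^ r * eC A (t + 1 - r)) • A ^ r) (t + 1)]
    calc eC A (t + 1) • (1 : Matrix (Fin n) (Fin n) ℂ)
          - ∑ r ∈ Finset.range (t + 1), ((-1 : ℂ) ^ r * eC A (t - r)) • A ^ (r + 1)
        = ∑ r ∈ Finset.range (t + 1), -(((-1 : ℂ) ^ r * eC A (t - r)) • A ^ (r + 1))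
            + eC A (t + 1) • (1 : Matrix (Fin n) (Fin n) ℂ) := by
          rw [Finset.sum_neg_distrib]
          abel
      _ = ∑ r ∈ Finset.range (t + 1), ((-1 : ℂ) ^ (r + 1) * eC A (t + 1 - (r + 1))) • A ^ (r + 1)
            + ((-1 : ℂ) ^ 0 * eC A (t + 1 - 0)) • A ^ 0 := by
          rw [hf0]
          congr 1
          exact Finset.sum_congr rfl fun r _ => (hfr r).symm

lemma derivative_finset_prod {ι : Type*} [DecidableEq ι] (s : Finset ι) (f : ι → ℂ[X]) :
    Polynomial.derivative (∏ i ∈ s, f i)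
      = ∑ i ∈ s, (∏ j ∈ s.erase i, f j) * Polynomial.derivative (f i) := by
  classical
  induction s using Finset.induction_on with
  | empty => simp
  | @insert a s ha ih =>
    rw [Finset.prod_insert ha, Polynomial.derivative_mul, ih, Finset.mul_sum,
      Finset.sum_insert ha, Finset.erase_insert ha, mul_comm (Polynomial.derivative (f a))]
    congr 1
    refine Finset.sum_congr rfl fun i hi => ?_
    rw [Finset.erase_insert_of_ne (by rintro rfl; exact ha hi),
      Finset.prod_insert (fun h => ha (Finset.mem_of_mem_erase h)), mul_assoc]

lemma derivative_det_eq {N : ℕ} (M : Matrix (Fin N) (Fin N) ℂ[X]) :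
    Polynomial.derivative M.det
      = ∑ i : Fin N, (M.updateCol i fun k => Polynomial.derivative (M k i)).det := by
  classical
  have hdet : ∀ (P : Matrix (Fin N) (Fin N) ℂ[X]),
      P.det = ∑ σ : Equiv.Perm (Fin N),
        ((Equiv.Perm.sign σ : ℤ) : ℂ[X]) * ∏ i, P (σ i) i := fun P => by
    rw [Matrix.det_apply]
    exact Finset.sum_congr rfl fun σ _ => by rw [Units.smul_def, zsmul_eq_mul]
  rw [hdet M, map_sum]
  have h1 : ∀ σ : Equiv.Perm (Fin N),
      Polynomial.derivative (((Equiv.Perm.sign σ : ℤ) : ℂ[X]) * ∏ i, M (σ i) i)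
        = ∑ i : Fin N, ((Equiv.Perm.sign σ : ℤ) : ℂ[X])
            * ((∏ j ∈ Finset.univ.erase i, M (σ j) j)
                * Polynomial.derivative (M (σ i) i)) := by
    intro σ
    rw [Polynomial.derivative_mul]
    have hz : Polynomial.derivative (((Equiv.Perm.sign σ : ℤ) : ℂ[X])) = 0 := by
      simp
    rw [hz, zero_mul, zero_add, derivative_finset_prod, Finset.mul_sum]
  rw [Finset.sum_congr rfl fun σ _ => h1 σ, Finset.sum_comm]
  refine Finset.sum_congr rfl fun i _ => ?_
  rw [hdet]
  refine Finset.sum_congr rfl fun σ _ => ?_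
  congr 1
  rw [← Finset.mul_prod_erase Finset.univ _ (Finset.mem_univ i)]
  rw [Matrix.updateCol_apply, if_pos rfl, mul_comm]
  congr 1
  refine Finset.prod_congr rfl fun j hj => ?_
  rw [Matrix.updateCol_apply, if_neg (Finset.ne_of_mem_erase hj)]
lemma deriv_Mm_entry (A : Matrix (Fin n) (Fin n) ℂ) (k i : Fin n) :
    Polynomial.derivative (Mm A k i) = Polynomial.C (A k i) := by
  rw [Mm_apply]
  rw [Polynomial.derivative_add, Polynomial.derivative_mul, Polynomial.derivative_X,
    Polynomial.derivative_C, one_mul, mul_zero, add_zero]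
  rw [apply_ite Polynomial.derivative, Polynomial.derivative_one, Polynomial.derivative_zero,
    ite_self, zero_add]

lemma deriv_det_Mm (A : Matrix (Fin n) (Fin n) ℂ) :
    Polynomial.derivative (Mm A).det
      = ∑ i : Fin n, ∑ k : Fin n, (Mm A).adjugate i k * Polynomial.C (A k i) := by
  rw [derivative_det_eq]
  refine Finset.sum_congr rfl fun i _ => ?_
  have h1 : (fun k => Polynomial.derivative (Mm A k i)) = fun k => Polynomial.C (A k i) := by
    funext k; exact deriv_Mm_entry A k i
  rw [h1, ← Matrix.cramer_apply, Matrix.cramer_eq_adjugate_mulVec]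
  simp [Matrix.mulVec, dotProduct]

lemma newton (A : Matrix (Fin n) (Fin n) ℂ) (t : ℕ) :
    eC A (t + 1) * ((t : ℂ) + 1)
      = ∑ r ∈ Finset.range (t + 1),
          ((-1 : ℂ) ^ r * eC A (t - r)) * Matrix.trace (A ^ (r + 1)) := by
  have h := congrArg (fun p : ℂ[X] => p.coeff t) (deriv_det_Mm A)
  simp only [Polynomial.coeff_derivative, Polynomial.finset_sum_coeff,
    Polynomial.coeff_mul_C] at h
  have h2 : ∑ i : Fin n, ∑ k : Fin n, ((Mm A).adjugate i k).coeff t * A k i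
      = Matrix.trace (Dm A t * A) := by
    rw [Matrix.trace]
    refine Finset.sum_congr rfl fun i _ => ?_
    rw [Matrix.diag_apply, Matrix.mul_apply]
    rfl
  rw [h2] at h
  rw [Dm_formula, Finset.sum_mul] at h
  have h3 : ∀ r ∈ Finset.range (t + 1),
      (((-1 : ℂ) ^ r * eC A (t - r)) • A ^ r) * A
        = ((-1 : ℂ) ^ r * eC A (t - r)) • A ^ (r + 1) := by
    intro r _
    rw [smul_mul_assoc, ← pow_succ]
  rw [Finset.sum_congr rfl h3] at h
  rw [Matrix.trace_sum] at h
  simp only [Matrix.trace_smul, smul_eq_mul] at h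
  exact h



lemma traceCoeff_eq_ccc {n : ℕ} (A : Matrix (Fin n) (Fin n) ℂ) (m : ℕ) :
    traceCoeff A m = ccc A m m := rfl

lemma traceCoeff_zero {n : ℕ} (A : Matrix (Fin n) (Fin n) ℂ) :
    traceCoeff A 0 = 1 := by
  rw [traceCoeff_eq_ccc, ccc]
  rw [Finset.sum_congr rfl (fun k _ => Finset.prod_of_isEmpty _)]
  rw [Finset.sum_const, nsmul_eq_mul, mul_one]
  have : cS 0 0 = Fintype.piFinset fun _ : Fin 0 => Finset.range 1 := by
    rw [cS]
    exact Finset.filter_true_of_mem fun k _ => by simp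
  rw [this]
  simp

lemma key {n : ℕ} (A : Matrix (Fin n) (Fin n) ℂ) (m : ℕ) :
    traceCoeff A m = (-1 : ℂ) ^ m * eC A m := by
  induction m using Nat.strong_induction_on with
  | _ m ih =>
    match m with
    | 0 => rw [traceCoeff_zero, eC_zero]; simp
    | Nat.succ m =>
      have hm : ((m : ℂ) + 1) ≠ 0 := by
        have := Nat.cast_ne_zero (R := ℂ).mpr (Nat.succ_ne_zero m)
        push_cast at this; exact this
      apply mul_left_cancel₀ hm
      have hrec := trace_rec A (m := m + 1)
      push_cast at hrec
      rw [← traceCoeff_eq_ccc] at hrec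
      have hsub : ∀ l : ℕ, m + 1 - (l + 1) = m - l := fun l => by omega
      simp only [hsub, ← traceCoeff_eq_ccc] at hrec
      rw [hrec]
      have hnewton := newton A m
      have hRHS : ((m : ℂ) + 1) * ((-1 : ℂ) ^ (m + 1) * eC A (m + 1))
          = (-1 : ℂ) ^ (m + 1) * (eC A (m + 1) * ((m : ℂ) + 1)) := by ring
      rw [hRHS, hnewton, Finset.mul_sum, ← Finset.sum_neg_distrib]
      refine Finset.sum_congr rfl fun l hl => ?_
      rw [Finset.mem_range] at hl
      rw [ih (m - l) (by omega)]
      have hsign : (-1 : ℂ) ^ (m + 1) * (-1 : ℂ) ^ l = -(-1 : ℂ) ^ (m - l) := by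
        rw [← pow_add, show m + 1 + l = (m - l) + 2 * l + 1 by omega,
          pow_add, pow_add, pow_mul]
        norm_num
      have hp : Matrix.trace (A ^ (l + 1)) = pS A (l + 1) := rfl
      calc -(pS A (l + 1) * ((-1 : ℂ) ^ (m - l) * eC A (m - l)))
          = ((-1 : ℂ) ^ (m + 1) * (-1 : ℂ) ^ l) * eC A (m - l) * pS A (l + 1) := by
            rw [hsign]; ring
        _ = (-1 : ℂ) ^ (m + 1) * ((-1 : ℂ) ^ l * eC A (m - l) * Matrix.trace (A ^ (l + 1))) := by
            rw [hp]; ring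

end RedCompAux

/-- Trace expansion of the reduced order-one complement: for an `n×n` complex
matrix `A` and `0 ≤ s ≤ n`,
`redComp s A = (−1)^(n−s) • ∑_{r=0}^{n−s} c_{n−s−r} • A^r`. -/
theorem redComp_trace_expansion {n : ℕ} (A : Matrix (Fin n) (Fin n) ℂ) (s : ℕ)
    (hs : s ≤ n) :
    redComp s A
      = (-1 : ℂ) ^ (n - s) •
          ∑ r ∈ Finset.range (n - s + 1), traceCoeff A (n - s - r) • A ^ r := by
  have h1 : redComp s A = Dm A (n - s) := rfl
  rw [h1, Dm_formula, Finset.smul_sum]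
  refine Finset.sum_congr rfl fun r hr => ?_
  rw [Finset.mem_range] at hr
  rw [key A (n - s - r), smul_smul]
  congr 1
  rw [← mul_assoc, ← pow_add, show (n - s) + (n - s - r) = 2 * (n - s - r) + r by omega,
    pow_add, pow_mul]
  norm_num
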